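/- arXiv:1208.1229 — 2 statements merged into one kernel-verified Lean document; each statement's English description precedes it below -/
import Mathlib

section
/- For the Kummer surface quartic K = r·(x₀₀⁴+x₀₁⁴+x₁₀⁴+x₁₁⁴) + t·x₀₀x₀₁x₁₀x₁₁ + s₀₁·(x₀₀²x₀₁²+x₁₀²x₁₁²) + s₁₀·(x₀₀²x₁₀²+x₀₁²x₁₁²) + s₁₁·(x₀₀²x₁₁²+x₀₁²x₁₀²), when the coefficients r, s₀₁, s₁₀, s₁₁, t are defined as the signed 4×4 minors obtained by deleting the first row of the 5×5 matrix whose first row is (x₀₀⁴+x₀₁⁴+x₁₀⁴+x₁₁⁴, x₀₀²x₀₁²+x₁₀²x₁₁², x₀₀²x₁₀²+x₀₁²x₁₁², x₀₀²x₁₁²+x₀₁²x₁₀², x₀₀x₀₁x₁₀x₁₁) and whose remaining four rows are the partial derivatives of this row with respect to u₀₀, u₀₁, u₁₀, u₁₁ evaluated with x replaced by u, these coefficients satisfy the Segre cubic relation 16r³ + rt² + 4(s₀₁s₁₀s₁₁ − r s₀₁² − r s₁₀² − r s₁₁²) = 0 identically as a polynomial in u₀₀, u₀₁, u₁₀, u₁₁.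 -/
open MvPolynomial

namespace KummerSegre

/-- The variables `u₀₀, u₀₁, u₁₀, u₁₁`. -/
noncomputable abbrev u (i : Fin 4) : MvPolynomial (Fin 4) ℚ := X i

/-- The `4×5` matrix whose rows are the partial derivatives (with `x` replaced by `u`) of the
row `(x₀₀⁴+x₀₁⁴+x₁₀⁴+x₁₁⁴, x₀₀²x₀₁²+x₁₀²x₁₁², x₀₀²x₁₀²+x₀₁²x₁₁², x₀₀²x₁₁²+x₀₁²x₁₀², x₀₀x₀₁x₁₀x₁₁)`
with respect to `u₀₀, u₀₁, u₁₀, u₁₁`. -/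
noncomputable def M : Matrix (Fin 4) (Fin 5) (MvPolynomial (Fin 4) ℚ) :=
  !![4*u 0^3, 2*u 0*u 1^2, 2*u 0*u 2^2, 2*u 0*u 3^2, u 1*u 2*u 3;
     4*u 1^3, 2*u 0^2*u 1, 2*u 1*u 3^2, 2*u 1*u 2^2, u 0*u 2*u 3;
     4*u 2^3, 2*u 2*u 3^2, 2*u 0^2*u 2, 2*u 1^2*u 2, u 0*u 1*u 3;
     4*u 3^3, 2*u 2^2*u 3, 2*u 1^2*u 3, 2*u 0^2*u 3, u 0*u 1*u 2]

/-- The signed `4×4` minor of `M` obtained by deleting column `j`, with alternating signs,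
so that expanding the `5×5` determinant along its first row gives the Kummer quartic. -/
noncomputable def minor (j : Fin 5) : MvPolynomial (Fin 4) ℚ :=
  (-1 : MvPolynomial (Fin 4) ℚ) ^ (j : ℕ) * (M.submatrix id j.succAbove).det


lemma det4 {R : Type*} [CommRing R] (m : Matrix (Fin 4) (Fin 4) R) :
    m.det =
      m 0 0 * (m 1 1 * (m 2 2 * m 3 3 - m 2 3 * m 3 2)
        - m 1 2 * (m 2 1 * m 3 3 - m 2 3 * m 3 1)
        + m 1 3 * (m 2 1 * m 3 2 - m 2 2 * m 3 1))
      - m 0 1 * (m 1 0 * (m 2 2 * m 3 3 - m 2 3 * m 3 2)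
        - m 1 2 * (m 2 0 * m 3 3 - m 2 3 * m 3 0)
        + m 1 3 * (m 2 0 * m 3 2 - m 2 2 * m 3 0))
      + m 0 2 * (m 1 0 * (m 2 1 * m 3 3 - m 2 3 * m 3 1)
        - m 1 1 * (m 2 0 * m 3 3 - m 2 3 * m 3 0)
        + m 1 3 * (m 2 0 * m 3 1 - m 2 1 * m 3 0))
      - m 0 3 * (m 1 0 * (m 2 1 * m 3 2 - m 2 2 * m 3 1)
        - m 1 1 * (m 2 0 * m 3 2 - m 2 2 * m 3 0)
        + m 1 2 * (m 2 0 * m 3 1 - m 2 1 * m 3 0)) := by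
  rw [Matrix.det_succ_row_zero]
  simp only [Fin.sum_univ_succ, Matrix.det_fin_three, Matrix.submatrix_apply, Fin.succAbove, Fin.isValue]
  norm_num [Fin.lt_def, Fin.succ, Fin.castSucc, Fin.castAdd, Fin.castLE,
    show ((3:Fin 4):ℕ) = 3 from rfl, show ((2:Fin 4):ℕ) = 2 from rfl, show (⟨2, by norm_num⟩ : Fin 4) = 2 from rfl, show (⟨3, by norm_num⟩ : Fin 4) = 3 from rfl]
  ring

lemma hm0 : minor 0 = (-16)*u 1^4*u 2^4*u 3^4 + (16)*u 0^2*u 1^2*u 2^2*u 3^6 + (16)*u 0^2*u 1^2*u 2^6*u 3^2 + (16)*u 0^2*u 1^6*u 2^2*u 3^2 + (-16)*u 0^4*u 2^4*u 3^4 + (-16)*u 0^4*u 1^4*u 3^4 + (-16)*u 0^4*u 1^4*u 2^4 + (16)*u 0^6*u 1^2*u 2^2*u 3^2 := by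
  rw [minor, det4]
  norm_num [M, Matrix.submatrix_apply, Fin.succAbove, Fin.lt_def, Fin.succ, Fin.castSucc,
    Fin.castAdd, Fin.castLE, Fin.ext_iff,
    show ((0:Fin 5):ℕ) = 0 from rfl, show ((1:Fin 5):ℕ) = 1 from rfl,
    show ((2:Fin 5):ℕ) = 2 from rfl, show ((3:Fin 5):ℕ) = 3 from rfl,
    show ((4:Fin 5):ℕ) = 4 from rfl,
    show ((0:Fin 4):ℕ) = 0 from rfl, show ((1:Fin 4):ℕ) = 1 from rfl,
    show ((2:Fin 4):ℕ) = 2 from rfl, show ((3:Fin 4):ℕ) = 3 from rfl,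
    show (⟨2, by norm_num⟩ : Fin 5) = 2 from rfl, show (⟨3, by norm_num⟩ : Fin 5) = 3 from rfl,
    show (⟨4, by norm_num⟩ : Fin 5) = 4 from rfl]
  simp only [Matrix.cons_val, Matrix.cons_val_zero, Matrix.cons_val_one, Matrix.head_cons, Fin.isValue]
  ring

lemma hm1 : minor 1 = (16)*u 1^4*u 2^2*u 3^6 + (16)*u 1^4*u 2^6*u 3^2 + (-16)*u 1^8*u 2^2*u 3^2 + (-16)*u 0^2*u 1^2*u 3^8 + (-32)*u 0^2*u 1^2*u 2^4*u 3^4 + (-16)*u 0^2*u 1^2*u 2^8 + (16)*u 0^2*u 1^6*u 3^4 + (16)*u 0^2*u 1^6*u 2^4 + (16)*u 0^4*u 2^2*u 3^6 + (16)*u 0^4*u 2^6*u 3^2 + (-32)*u 0^4*u 1^4*u 2^2*u 3^2 + (16)*u 0^6*u 1^2*u 3^4 + (16)*u 0^6*u 1^2*u 2^4 + (-16)*u 0^8*u 2^2*u 3^2 := by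
  rw [minor, det4]
  norm_num [M, Matrix.submatrix_apply, Fin.succAbove, Fin.lt_def, Fin.succ, Fin.castSucc,
    Fin.castAdd, Fin.castLE, Fin.ext_iff,
    show ((0:Fin 5):ℕ) = 0 from rfl, show ((1:Fin 5):ℕ) = 1 from rfl,
    show ((2:Fin 5):ℕ) = 2 from rfl, show ((3:Fin 5):ℕ) = 3 from rfl,
    show ((4:Fin 5):ℕ) = 4 from rfl,
    show ((0:Fin 4):ℕ) = 0 from rfl, show ((1:Fin 4):ℕ) = 1 from rfl,
    show ((2:Fin 4):ℕ) = 2 from rfl, show ((3:Fin 4):ℕ) = 3 from rfl,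
    show (⟨2, by norm_num⟩ : Fin 5) = 2 from rfl, show (⟨3, by norm_num⟩ : Fin 5) = 3 from rfl,
    show (⟨4, by norm_num⟩ : Fin 5) = 4 from rfl]
  simp only [Matrix.cons_val, Matrix.cons_val_zero, Matrix.cons_val_one, Matrix.head_cons, Fin.isValue]
  ring

lemma hm2 : minor 2 = (16)*u 1^2*u 2^4*u 3^6 + (-16)*u 1^2*u 2^8*u 3^2 + (16)*u 1^6*u 2^4*u 3^2 + (-16)*u 0^2*u 2^2*u 3^8 + (16)*u 0^2*u 2^6*u 3^4 + (-32)*u 0^2*u 1^4*u 2^2*u 3^4 + (16)*u 0^2*u 1^4*u 2^6 + (-16)*u 0^2*u 1^8*u 2^2 + (16)*u 0^4*u 1^2*u 3^6 + (-32)*u 0^4*u 1^2*u 2^4*u 3^2 + (16)*u 0^4*u 1^6*u 3^2 + (16)*u 0^6*u 2^2*u 3^4 + (16)*u 0^6*u 1^4*u 2^2 + (-16)*u 0^8*u 1^2*u 3^2 := by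
  rw [minor, det4]
  norm_num [M, Matrix.submatrix_apply, Fin.succAbove, Fin.lt_def, Fin.succ, Fin.castSucc,
    Fin.castAdd, Fin.castLE, Fin.ext_iff,
    show ((0:Fin 5):ℕ) = 0 from rfl, show ((1:Fin 5):ℕ) = 1 from rfl,
    show ((2:Fin 5):ℕ) = 2 from rfl, show ((3:Fin 5):ℕ) = 3 from rfl,
    show ((4:Fin 5):ℕ) = 4 from rfl,
    show ((0:Fin 4):ℕ) = 0 from rfl, show ((1:Fin 4):ℕ) = 1 from rfl,
    show ((2:Fin 4):ℕ) = 2 from rfl, show ((3:Fin 4):ℕ) = 3 from rfl,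
    show (⟨2, by norm_num⟩ : Fin 5) = 2 from rfl, show (⟨3, by norm_num⟩ : Fin 5) = 3 from rfl,
    show (⟨4, by norm_num⟩ : Fin 5) = 4 from rfl]
  simp only [Matrix.cons_val, Matrix.cons_val_zero, Matrix.cons_val_one, Matrix.head_cons, Fin.isValue]
  ring

lemma hm3 : minor 3 = (-16)*u 1^2*u 2^2*u 3^8 + (16)*u 1^2*u 2^6*u 3^4 + (16)*u 1^6*u 2^2*u 3^4 + (16)*u 0^2*u 2^4*u 3^6 + (-16)*u 0^2*u 2^8*u 3^2 + (16)*u 0^2*u 1^4*u 3^6 + (-32)*u 0^2*u 1^4*u 2^4*u 3^2 + (-16)*u 0^2*u 1^8*u 3^2 + (-32)*u 0^4*u 1^2*u 2^2*u 3^4 + (16)*u 0^4*u 1^2*u 2^6 + (16)*u 0^4*u 1^6*u 2^2 + (16)*u 0^6*u 2^4*u 3^2 + (16)*u 0^6*u 1^4*u 3^2 + (-16)*u 0^8*u 1^2*u 2^2 := by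
  rw [minor, det4]
  norm_num [M, Matrix.submatrix_apply, Fin.succAbove, Fin.lt_def, Fin.succ, Fin.castSucc,
    Fin.castAdd, Fin.castLE, Fin.ext_iff,
    show ((0:Fin 5):ℕ) = 0 from rfl, show ((1:Fin 5):ℕ) = 1 from rfl,
    show ((2:Fin 5):ℕ) = 2 from rfl, show ((3:Fin 5):ℕ) = 3 from rfl,
    show ((4:Fin 5):ℕ) = 4 from rfl,
    show ((0:Fin 4):ℕ) = 0 from rfl, show ((1:Fin 4):ℕ) = 1 from rfl,
    show ((2:Fin 4):ℕ) = 2 from rfl, show ((3:Fin 4):ℕ) = 3 from rfl,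
    show (⟨2, by norm_num⟩ : Fin 5) = 2 from rfl, show (⟨3, by norm_num⟩ : Fin 5) = 3 from rfl,
    show (⟨4, by norm_num⟩ : Fin 5) = 4 from rfl]
  simp only [Matrix.cons_val, Matrix.cons_val_zero, Matrix.cons_val_one, Matrix.head_cons, Fin.isValue]
  ring

lemma hm4 : minor 4 = (32)*u 0^1*u 1^1*u 2^1*u 3^9 + (-64)*u 0^1*u 1^1*u 2^5*u 3^5 + (32)*u 0^1*u 1^1*u 2^9*u 3^1 + (-64)*u 0^1*u 1^5*u 2^1*u 3^5 + (-64)*u 0^1*u 1^5*u 2^5*u 3^1 + (32)*u 0^1*u 1^9*u 2^1*u 3^1 + (256)*u 0^3*u 1^3*u 2^3*u 3^3 + (-64)*u 0^5*u 1^1*u 2^1*u 3^5 + (-64)*u 0^5*u 1^1*u 2^5*u 3^1 + (-64)*u 0^5*u 1^5*u 2^1*u 3^1 + (32)*u 0^9*u 1^1*u 2^1*u 3^1 := by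
  rw [minor, det4]
  norm_num [M, Matrix.submatrix_apply, Fin.succAbove, Fin.lt_def, Fin.succ, Fin.castSucc,
    Fin.castAdd, Fin.castLE, Fin.ext_iff,
    show ((0:Fin 5):ℕ) = 0 from rfl, show ((1:Fin 5):ℕ) = 1 from rfl,
    show ((2:Fin 5):ℕ) = 2 from rfl, show ((3:Fin 5):ℕ) = 3 from rfl,
    show ((4:Fin 5):ℕ) = 4 from rfl,
    show ((0:Fin 4):ℕ) = 0 from rfl, show ((1:Fin 4):ℕ) = 1 from rfl,
    show ((2:Fin 4):ℕ) = 2 from rfl, show ((3:Fin 4):ℕ) = 3 from rfl,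
    show (⟨2, by norm_num⟩ : Fin 5) = 2 from rfl, show (⟨3, by norm_num⟩ : Fin 5) = 3 from rfl,
    show (⟨4, by norm_num⟩ : Fin 5) = 4 from rfl]
  simp only [Matrix.cons_val, Matrix.cons_val_zero, Matrix.cons_val_one, Matrix.head_cons, Fin.isValue]
  ring

set_option maxHeartbeats 2000000 in
/-- The coefficients `r, s₀₁, s₁₀, s₁₁, t` of the Kummer surface quartic, as signed minors,
satisfy the Segre cubic relation `16r³ + rt² + 4(s₀₁s₁₀s₁₁ − r s₀₁² − r s₁₀² − r s₁₁²) = 0`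
identically as polynomials in `u₀₀, u₀₁, u₁₀, u₁₁`. -/
theorem segre_cubic_relation :
    16 * minor 0 ^ 3 + minor 0 * minor 4 ^ 2 + 4 * (minor 1 * minor 2 * minor 3) -
      4 * minor 0 * minor 1 ^ 2 - 4 * minor 0 * minor 2 ^ 2 - 4 * minor 0 * minor 3 ^ 2 = 0 := by
  rw [hm0, hm1, hm2, hm3, hm4]
  ring

end KummerSegre
end

section
/- The G"opel function identity: the bracket binomial g₇₁₂₃₄₅₆ = [127][347][567]·([134][156][235][246] − [135][146][234][256]), with brackets specialized to the minors of the matrix D with columns (1,d_i,d_i³), is divisible by ∏_{i<j}(d_i−d_j), and the quotient equals (d₁+d₂+d₇)(d₃+d₄+d₇)(d₅+d₆+d₇)(d₁−d₂)(d₃−d₄)(d₅−d₆)(−d₁−d₂−d₃−d₄−d₅−d₆), a product of seven linear forms. -/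
open MvPolynomial

namespace GopelFunction

/-- The bracket `[ijk]`: the `3×3` minor on columns `i,j,k` of the matrix `D` whose columns
are `(1, dᵢ, dᵢ³)ᵗ`, where `d₁,…,d₇` are the variables `X 0, …, X 6`.  It equals
`(dᵢ−dⱼ)(dᵢ−dₖ)(dⱼ−dₖ)(dᵢ+dⱼ+dₖ)` up to sign. -/
noncomputable def br (i j k : Fin 7) : MvPolynomial (Fin 7) ℚ :=
  Matrix.det !![(1 : MvPolynomial (Fin 7) ℚ), 1, 1; X i, X j, X k; X i ^ 3, X j ^ 3, X k ^ 3]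

/-- The conic condition `Q₇ = [134][156][235][246] − [135][146][234][256]`. -/
noncomputable def Q7 : MvPolynomial (Fin 7) ℚ :=
  br 0 2 3 * br 0 4 5 * br 1 2 4 * br 1 3 5 - br 0 2 4 * br 0 3 5 * br 1 2 3 * br 1 4 5

/-- The Göpel function `g₇₁₂₃₄₅₆ = [127][347][567]·Q₇`. -/
noncomputable def g7123456 : MvPolynomial (Fin 7) ℚ :=
  br 0 1 6 * br 2 3 6 * br 4 5 6 * Q7

lemma br_eq (i j k : Fin 7) :
    br i j k = -((X i - X j) * (X i - X k) * (X j - X k) * (X i + X j + X k)) := by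
  simp [br, Matrix.det_fin_three]
  ring

lemma Q7_eq : Q7 =
    (X 0 - X 1) * (X 0 - X 2) * (X 0 - X 3) * (X 0 - X 4) * (X 0 - X 5) *
    (X 1 - X 2) * (X 1 - X 3) * (X 1 - X 4) * (X 1 - X 5) *
    (X 2 - X 3) * (X 2 - X 4) * (X 2 - X 5) *
    (X 3 - X 4) * (X 3 - X 5) * (X 4 - X 5) *
    (X 0 + X 1 + X 2 + X 3 + X 4 + X 5) := by
  simp only [Q7, br_eq]
  ring

lemma prod_expand :
    (∏ p ∈ Finset.univ.filter (fun p : Fin 7 × Fin 7 => p.1 < p.2),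
      (X p.1 - X p.2 : MvPolynomial (Fin 7) ℚ)) =
    (X 0 - X 1) * ((X 0 - X 2) * ((X 0 - X 3) * ((X 0 - X 4) * ((X 0 - X 5) * ((X 0 - X 6) *
    ((X 1 - X 2) * ((X 1 - X 3) * ((X 1 - X 4) * ((X 1 - X 5) * ((X 1 - X 6) *
    ((X 2 - X 3) * ((X 2 - X 4) * ((X 2 - X 5) * ((X 2 - X 6) *
    ((X 3 - X 4) * ((X 3 - X 5) * ((X 3 - X 6) *
    ((X 4 - X 5) * ((X 4 - X 6) * (X 5 - X 6)))))))))))))))))))) := by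
  rw [show (Finset.univ.filter (fun p : Fin 7 × Fin 7 => p.1 < p.2)) =
    ({(0,1),(0,2),(0,3),(0,4),(0,5),(0,6),(1,2),(1,3),(1,4),(1,5),(1,6),
      (2,3),(2,4),(2,5),(2,6),(3,4),(3,5),(3,6),(4,5),(4,6),(5,6)} :
      Finset (Fin 7 × Fin 7)) from by decide]
  repeat rw [Finset.prod_insert (by decide)]
  rw [Finset.prod_singleton]

/-- The Göpel function `g₇₁₂₃₄₅₆` is divisible by `∏_{i<j}(dᵢ−dⱼ)`, with quotient the
product of the seven linear forms
`(d₁+d₂+d₇)(d₃+d₄+d₇)(d₅+d₆+d₇)(d₁−d₂)(d₃−d₄)(d₅−d₆)(−d₁−d₂−d₃−d₄−d₅−d₆)`. -/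
theorem g7123456_factorization :
    g7123456 =
      (∏ p ∈ Finset.univ.filter (fun p : Fin 7 × Fin 7 => p.1 < p.2), (X p.1 - X p.2)) *
        ((X 0 + X 1 + X 6) * (X 2 + X 3 + X 6) * (X 4 + X 5 + X 6) *
         (X 0 - X 1) * (X 2 - X 3) * (X 4 - X 5) *
         (-(X 0 + X 1 + X 2 + X 3 + X 4 + X 5))) := by
  rw [g7123456, Q7_eq, br_eq, br_eq, br_eq, prod_expand]
  generalize (X 0 - X 1 : MvPolynomial (Fin 7) ℚ) = a01
  generalize (X 0 - X 2 : MvPolynomial (Fin 7) ℚ) = a02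
  generalize (X 0 - X 3 : MvPolynomial (Fin 7) ℚ) = a03
  generalize (X 0 - X 4 : MvPolynomial (Fin 7) ℚ) = a04
  generalize (X 0 - X 5 : MvPolynomial (Fin 7) ℚ) = a05
  generalize (X 0 - X 6 : MvPolynomial (Fin 7) ℚ) = a06
  generalize (X 1 - X 2 : MvPolynomial (Fin 7) ℚ) = a12
  generalize (X 1 - X 3 : MvPolynomial (Fin 7) ℚ) = a13
  generalize (X 1 - X 4 : MvPolynomial (Fin 7) ℚ) = a14
  generalize (X 1 - X 5 : MvPolynomial (Fin 7) ℚ) = a15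
  generalize (X 1 - X 6 : MvPolynomial (Fin 7) ℚ) = a16
  generalize (X 2 - X 3 : MvPolynomial (Fin 7) ℚ) = a23
  generalize (X 2 - X 4 : MvPolynomial (Fin 7) ℚ) = a24
  generalize (X 2 - X 5 : MvPolynomial (Fin 7) ℚ) = a25
  generalize (X 2 - X 6 : MvPolynomial (Fin 7) ℚ) = a26
  generalize (X 3 - X 4 : MvPolynomial (Fin 7) ℚ) = a34
  generalize (X 3 - X 5 : MvPolynomial (Fin 7) ℚ) = a35
  generalize (X 3 - X 6 : MvPolynomial (Fin 7) ℚ) = a36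
  generalize (X 4 - X 5 : MvPolynomial (Fin 7) ℚ) = a45
  generalize (X 4 - X 6 : MvPolynomial (Fin 7) ℚ) = a46
  generalize (X 5 - X 6 : MvPolynomial (Fin 7) ℚ) = a56
  generalize (X 0 + X 1 + X 6 : MvPolynomial (Fin 7) ℚ) = s016
  generalize (X 2 + X 3 + X 6 : MvPolynomial (Fin 7) ℚ) = s236
  generalize (X 4 + X 5 + X 6 : MvPolynomial (Fin 7) ℚ) = s456
  generalize (X 0 + X 1 + X 2 + X 3 + X 4 + X 5 : MvPolynomial (Fin 7) ℚ) = t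
  ring

end GopelFunction
end
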